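/- Let Π^{(n)}_t be a nonnegative integer-valued process with E[∫₀^{a_N} Π^{(n)}_u du] ≤ (2/d)·log(2ŝ/d + n(e^{ŝ a_N} - 1)), and let τ_N be the first time a rate-(m/N)·Π^{(n)}_t Poisson clock rings. If a_N/N → 0 as N → ∞, then P(τ_N < a_N) → 0 as N → ∞. -/

import Mathlib

open Real Filter MeasureTheory
open scoped Topology

/-- No mutation jump before time `a_N = o(N)`: if `I N = ∫₀^{a_N} Π^{(n)}_u du` is the dual
occupation time, with expectation bounded by `(2/d) log(2sh/d + n(e^{sh a_N} - 1))` (`sh = s + d/2`),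
and `P(τ_N < a_N) = E[1 - exp(-(m/N) I_N)]` is the probability that a rate-`(m/N)·Π` Poisson
clock rings before `a_N`, then `P(τ_N < a_N) → 0` as `N → ∞` whenever `a_N / N → 0`. -/
theorem no_mutation_before_aN (s d m n : ℝ) (hs : 0 < s) (hd : 0 < d) (hm : 0 < m) (hn : 1 ≤ n)
    {Ω : Type*} [MeasurableSpace Ω] (μ : ℕ → Measure Ω)
    (hprob : ∀ N, IsProbabilityMeasure (μ N))
    (I : ℕ → Ω → ℝ) (hImeas : ∀ N, Measurable (I N)) (hInn : ∀ N ω, 0 ≤ I N ω)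
    (hIint : ∀ N, Integrable (I N) (μ N))
    (a : ℕ → ℝ) (ha : ∀ N, 0 ≤ a N)
    (hE : ∀ N : ℕ, 1 ≤ N →
      (∫ ω, I N ω ∂μ N) ≤
        2 / d * Real.log (2 * (s + d / 2) / d + n * (Real.exp ((s + d / 2) * a N) - 1)))
    (halim : Tendsto (fun N : ℕ => a N / (N : ℝ)) atTop (𝓝 0)) :
    Tendsto (fun N : ℕ => ∫ ω, (1 - Real.exp (-(m / (N : ℝ)) * I N ω)) ∂μ N) atTop (𝓝 0) := by
  set sh := s + d / 2 with hshdef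
  set C := 2 * sh / d with hCdef
  have hsh0 : 0 < sh := by rw [hshdef]; positivity
  have hC0 : 0 < C := by rw [hCdef]; positivity
  have key0 : ∀ N : ℕ, 0 ≤ ∫ ω, (1 - Real.exp (-(m / (N : ℝ)) * I N ω)) ∂μ N := by
    intro N
    refine integral_nonneg fun ω => ?_
    simp only [Pi.zero_apply]
    have h1 : -(m / (N : ℝ)) * I N ω ≤ 0 := by
      have : 0 ≤ m / (N : ℝ) := by positivity
      nlinarith [hInn N ω]
    have := Real.exp_le_exp.mpr h1
    simp only [Real.exp_zero] at this
    linarith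
  have key : ∀ᶠ N in atTop, (∫ ω, (1 - Real.exp (-(m / (N : ℝ)) * I N ω)) ∂μ N)
      ≤ (2 * m / d) * (Real.log (C + n) / N) + (2 * m * sh / d) * (a N / N) := by
    filter_upwards [eventually_ge_atTop 1] with N hN
    have hN0 : (0 : ℝ) < N := by exact_mod_cast Nat.lt_of_lt_of_le Nat.zero_lt_one hN
    haveI := hprob N
    have step1 : (∫ ω, (1 - Real.exp (-(m / (N : ℝ)) * I N ω)) ∂μ N)
        ≤ ∫ ω, (m / (N : ℝ)) * I N ω ∂μ N := by
      refine integral_mono_of_nonneg ?_ ((hIint N).const_mul _) ?_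
      · filter_upwards with ω
        have h1 : -(m / (N : ℝ)) * I N ω ≤ 0 := by
          have : 0 ≤ m / (N : ℝ) := by positivity
          nlinarith [hInn N ω]
        have := Real.exp_le_exp.mpr h1
        simp only [Real.exp_zero] at this
        simp only [Pi.zero_apply]
        linarith
      · filter_upwards with ω
        have h2 := Real.add_one_le_exp (-(m / (N : ℝ)) * I N ω)
        linarith
    rw [MeasureTheory.integral_const_mul] at step1
    have step2 : (m / (N : ℝ)) * ∫ ω, I N ω ∂μ N
        ≤ (m / (N : ℝ)) * (2 / d * Real.log (C + n * (Real.exp (sh * a N) - 1))) :=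
      mul_le_mul_of_nonneg_left (hE N hN) (by positivity)
    have hx : 0 ≤ sh * a N := mul_nonneg hsh0.le (ha N)
    have he : 1 ≤ Real.exp (sh * a N) := Real.one_le_exp hx
    have step3 : Real.log (C + n * (Real.exp (sh * a N) - 1)) ≤ Real.log (C + n) + sh * a N := by
      have harg : C + n * (Real.exp (sh * a N) - 1) ≤ (C + n) * Real.exp (sh * a N) := by
        nlinarith
      calc Real.log (C + n * (Real.exp (sh * a N) - 1))
          ≤ Real.log ((C + n) * Real.exp (sh * a N)) := by
            apply Real.log_le_log (by nlinarith) harg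
        _ = Real.log (C + n) + sh * a N := by
            rw [Real.log_mul (by positivity) (Real.exp_ne_zero _), Real.log_exp]
    have step4 : (m / (N : ℝ)) * (2 / d * Real.log (C + n * (Real.exp (sh * a N) - 1)))
        ≤ (m / (N : ℝ)) * (2 / d * (Real.log (C + n) + sh * a N)) := by
      have h0 : (0:ℝ) ≤ m / (N : ℝ) * (2 / d) := by positivity
      have := mul_le_mul_of_nonneg_left step3 h0
      calc (m / (N : ℝ)) * (2 / d * Real.log (C + n * (Real.exp (sh * a N) - 1)))
          = m / (N : ℝ) * (2 / d) * Real.log (C + n * (Real.exp (sh * a N) - 1)) := by ring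
        _ ≤ m / (N : ℝ) * (2 / d) * (Real.log (C + n) + sh * a N) := this
        _ = (m / (N : ℝ)) * (2 / d * (Real.log (C + n) + sh * a N)) := by ring
    have heq : (m / (N : ℝ)) * (2 / d * (Real.log (C + n) + sh * a N))
        = (2 * m / d) * (Real.log (C + n) / N) + (2 * m * sh / d) * (a N / N) := by
      field_simp
    linarith [step1, step2, step4]
  have h1 : Tendsto (fun N : ℕ => Real.log (C + n) / (N : ℝ)) atTop (𝓝 0) :=
    tendsto_const_div_atTop_nhds_zero_nat _
  have hlim : Tendsto (fun N : ℕ => (2 * m / d) * (Real.log (C + n) / N)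
      + (2 * m * sh / d) * (a N / N)) atTop (𝓝 0) := by
    have := (h1.const_mul (2 * m / d)).add (halim.const_mul (2 * m * sh / d))
    simpa using this
  exact tendsto_of_tendsto_of_tendsto_of_le_of_le' tendsto_const_nhds hlim
    (Eventually.of_forall key0) key
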